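/- Let A, B be positive definite d×d matrices with B ⪯ A and det(A) ≤ 2 det(B). Then for every nonzero x ∈ R^d, ||x||²_{B^{-1}} ≤ 2 ||x||²_{A^{-1}}, i.e., xᵀB^{-1}x ≤ 2 xᵀA^{-1}x. -/

import Mathlib

open Matrix

private lemma conj_psd {d : ℕ} {C S : Matrix (Fin d) (Fin d) ℝ} (hC : C.PosSemidef)
    (hS : S.IsHermitian) : (S * C * S).PosSemidef := by
  have := hC.mul_mul_conjTranspose_same S
  rwa [hS.eq] at this

private lemma conj_pd {d : ℕ} {C S : Matrix (Fin d) (Fin d) ℝ} (hC : C.PosDef)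
    (hS : S.IsHermitian) (hSdet : S.det ≠ 0) : (S * C * S).PosDef := by
  refine Matrix.PosDef.of_dotProduct_mulVec_pos ?_ ?_
  · show (S * C * S)ᴴ = S * C * S
    rw [conjTranspose_mul, conjTranspose_mul, hS.eq, hC.1.eq, Matrix.mul_assoc]
  · intro x hx
    have hSx : S *ᵥ x ≠ 0 := by
      intro h
      apply hx
      have : S⁻¹ *ᵥ (S *ᵥ x) = x := by
        rw [mulVec_mulVec, nonsing_inv_mul _ hSdet.isUnit, one_mulVec]
      rw [h, mulVec_zero] at this
      exact this.symm
    have := hC.dotProduct_mulVec_pos hSx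
    simp only [star_trivial] at this ⊢
    calc (0:ℝ) < (S *ᵥ x) ⬝ᵥ C *ᵥ (S *ᵥ x) := this
      _ = x ⬝ᵥ (S * C * S) *ᵥ x := by
          have hsym : x ᵥ* S = S *ᵥ x := by
            have hT : Sᵀ = S := by
              rw [← conjTranspose_eq_transpose_of_trivial, hS.eq]
            conv_lhs => rw [← hT]
            rw [vecMul_transpose]
          conv_rhs => rw [Matrix.mul_assoc, ← mulVec_mulVec, ← mulVec_mulVec,
            dotProduct_mulVec, hsym]

set_option maxHeartbeats 2000000 in
theorem inv_quad_form_doubling (d : ℕ)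
    (A B : Matrix (Fin d) (Fin d) ℝ)
    (hA : A.PosDef) (hB : B.PosDef)
    (hBA : (A - B).PosSemidef) (hdet : A.det ≤ 2 * B.det) :
    ∀ x : Fin d → ℝ, x ≠ 0 → x ⬝ᵥ B⁻¹ *ᵥ x ≤ 2 * (x ⬝ᵥ A⁻¹ *ᵥ x) := by
  classical
  intro x _
  have hAdet : (0:ℝ) < A.det := hA.det_pos
  have hBdet : (0:ℝ) < B.det := hB.det_pos
  set S := (open scoped MatrixOrder in CFC.sqrt A) with hSdef
  have hSps : S.PosSemidef := open scoped MatrixOrder in (CFC.sqrt_nonneg A).posSemidef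
  have hSH : S.IsHermitian := hSps.1
  have hSS : S * S = A := open scoped MatrixOrder in CFC.sqrt_mul_sqrt_self A hA.posSemidef.nonneg
  have hSdet2 : S.det * S.det = A.det := by rw [← det_mul, hSS]
  have hSdet0 : S.det ≠ 0 := by
    intro h
    rw [h, mul_zero] at hSdet2
    exact hAdet.ne' hSdet2.symm
  have h1 : S * S⁻¹ = 1 := mul_nonsing_inv _ hSdet0.isUnit
  have h2 : S⁻¹ * S = 1 := nonsing_inv_mul _ hSdet0.isUnit
  have hSinvH : (S⁻¹).IsHermitian := hSH.inv
  have hSinvdet0 : (S⁻¹).det ≠ 0 := by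
    rw [det_nonsing_inv]
    simpa using hSdet0
  have hBinv : (B⁻¹).PosDef := hB.inv
  set M := S * B⁻¹ * S with hMdef
  have hMpd : M.PosDef := conj_pd hBinv hSH hSdet0
  have hMH : M.IsHermitian := hMpd.1
  set N := S⁻¹ * B * S⁻¹ with hNdef
  -- M * N = 1 and N * M = 1
  have hMN : M * N = 1 := by
    have hBB : B⁻¹ * B = 1 := nonsing_inv_mul _ hBdet.ne'.isUnit
    calc S * B⁻¹ * S * (S⁻¹ * B * S⁻¹)
        = S * (B⁻¹ * ((S * S⁻¹) * (B * S⁻¹))) := by simp only [Matrix.mul_assoc]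
      _ = S * ((B⁻¹ * B) * S⁻¹) := by rw [h1, one_mul, Matrix.mul_assoc]
      _ = S * S⁻¹ := by rw [hBB, one_mul]
      _ = 1 := h1
  have hNM : N * M = 1 := mul_eq_one_comm.mp hMN
  -- 1 - N is PSD
  have h1mN : (1 - N).PosSemidef := by
    have h := conj_psd hBA hSinvH
    have heq : S⁻¹ * (A - B) * S⁻¹ = 1 - N := by
      rw [Matrix.mul_sub, Matrix.sub_mul, hNdef]
      congr 1
      rw [← hSS, ← Matrix.mul_assoc, Matrix.mul_assoc (S⁻¹ * S), h2, one_mul, h1]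
    rwa [heq] at h
  -- eigenvalues of M
  set μ := hMH.eigenvalues with hμ
  have hμpos : ∀ i, 0 < μ i := hMpd.eigenvalues_pos
  have hμge1 : ∀ i, 1 ≤ μ i := by
    intro i
    set v : Fin d → ℝ := ⇑(hMH.eigenvectorBasis i) with hv
    have hvM : M *ᵥ v = μ i • v := hMH.mulVec_eigenvectorBasis i
    have hvne : v ≠ 0 := by
      intro h
      apply hMH.eigenvectorBasis.orthonormal.ne_zero i
      ext j
      exact congrFun h j
    have hvv : 0 < v ⬝ᵥ v := by
      obtain ⟨j, hj⟩ := Function.ne_iff.mp hvne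
      have : (0:ℝ) < ∑ k, v k * v k :=
        Finset.sum_pos' (fun k _ => mul_self_nonneg (v k))
          ⟨j, Finset.mem_univ j, by simp only [Pi.zero_apply] at hj; exact mul_self_pos.mpr hj⟩
      simpa [dotProduct] using this
    have hNv : N *ᵥ v = (μ i)⁻¹ • v := by
      have : v = μ i • (N *ᵥ v) := by
        calc v = (N * M) *ᵥ v := by rw [hNM, one_mulVec]
          _ = N *ᵥ (M *ᵥ v) := by rw [mulVec_mulVec]
          _ = N *ᵥ (μ i • v) := by rw [hvM]
          _ = μ i • (N *ᵥ v) := by rw [mulVec_smul]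
      have h' := congrArg (fun w => (μ i)⁻¹ • w) this
      simpa [smul_smul, inv_mul_cancel₀ (hμpos i).ne'] using h'.symm
    have hquad := h1mN.dotProduct_mulVec_nonneg v
    simp only [star_trivial, sub_mulVec, one_mulVec, dotProduct_sub, hNv,
      dotProduct_smul, smul_eq_mul] at hquad
    have hinv : (μ i)⁻¹ ≤ 1 := by
      nlinarith [hvv]
    have hmm := mul_le_mul_of_nonneg_left hinv (hμpos i).le
    rwa [mul_inv_cancel₀ (hμpos i).ne', mul_one] at hmm
  have hμle2 : ∀ i, μ i ≤ 2 := by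
    intro i
    have hdetM : M.det = A.det * (B.det)⁻¹ := by
      have hd : M.det = S.det * (B.det)⁻¹ * S.det := by
        rw [hMdef, det_mul, det_mul, det_nonsing_inv, Ring.inverse_eq_inv']
      rw [hd, ← hSdet2]
      ring
    have hdetM2 : M.det ≤ 2 := by
      rw [hdetM]
      rw [mul_inv_le_iff₀ hBdet]
      linarith
    have hprod : M.det = ∏ j, μ j := by
      have := hMH.det_eq_prod_eigenvalues
      simpa using this
    have herase : (1:ℝ) ≤ ∏ j ∈ Finset.univ.erase i, μ j := by
      have := Finset.prod_le_prod (s := Finset.univ.erase i)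
        (f := fun _ => (1:ℝ)) (g := μ) (fun _ _ => zero_le_one) (fun j _ => hμge1 j)
      simpa using this
    have : μ i ≤ ∏ j, μ j := by
      calc μ i = μ i * 1 := (mul_one _).symm
        _ ≤ μ i * ∏ j ∈ Finset.univ.erase i, μ j :=
            mul_le_mul_of_nonneg_left herase (hμpos i).le
        _ = ∏ j, μ j := Finset.mul_prod_erase Finset.univ μ (Finset.mem_univ i)
    linarith [hprod ▸ hdetM2]
  -- 2 • 1 - M is PSD
  have hkey : ((2:ℝ) • (1 : Matrix (Fin d) (Fin d) ℝ) - M).PosSemidef := by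
    set U : Matrix (Fin d) (Fin d) ℝ := (hMH.eigenvectorUnitary : Matrix (Fin d) (Fin d) ℝ) with hU
    have hUU : U * Uᴴ = 1 := by
      rw [← star_eq_conjTranspose]
      exact Matrix.mem_unitaryGroup_iff.mp hMH.eigenvectorUnitary.2
    have hD : (Matrix.diagonal (fun i => 2 - μ i)).PosSemidef :=
      Matrix.PosSemidef.diagonal (fun i => by simpa using (hμle2 i))
    have hconj := hD.mul_mul_conjTranspose_same U
    have heq : U * Matrix.diagonal (fun i => 2 - μ i) * Uᴴ
        = (2:ℝ) • (1 : Matrix (Fin d) (Fin d) ℝ) - M := by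
      have hdiag : Matrix.diagonal (fun i => 2 - μ i)
          = (2:ℝ) • (1 : Matrix (Fin d) (Fin d) ℝ) - Matrix.diagonal μ := by
        ext j k
        by_cases h : j = k <;>
          simp [Matrix.diagonal_apply, Matrix.one_apply, h]
      have hspec := hMH.spectral_theorem
      rw [hdiag, Matrix.mul_sub, Matrix.sub_mul, Matrix.mul_smul, mul_one, Matrix.smul_mul, hUU]
      congr 1
      conv_rhs => rw [hspec]
      rw [Unitary.conjStarAlgAut_apply, star_eq_conjTranspose]
      congr 2
    rwa [heq] at hconj
  -- conjugate back
  have hfinal : ((2:ℝ) • A⁻¹ - B⁻¹).PosSemidef := by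
    have h := conj_psd hkey hSinvH
    have heq : S⁻¹ * ((2:ℝ) • (1 : Matrix (Fin d) (Fin d) ℝ) - M) * S⁻¹
        = (2:ℝ) • A⁻¹ - B⁻¹ := by
      rw [Matrix.mul_sub, Matrix.sub_mul]
      congr 1
      · rw [Matrix.mul_smul, mul_one, Matrix.smul_mul]
        congr 1
        rw [← hSS, Matrix.mul_inv_rev]
      · rw [hMdef, ← Matrix.mul_assoc, ← Matrix.mul_assoc, h2, one_mul, Matrix.mul_assoc,
          h1, mul_one]
    rwa [heq] at h
  have := hfinal.dotProduct_mulVec_nonneg x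
  simp only [star_trivial, sub_mulVec, smul_mulVec, dotProduct_sub, dotProduct_smul,
    smul_eq_mul] at this
  linarith
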